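/- Let K_* be Schur-stabilizing with N_{K_*} = R K_* − Bᵀ X_* A_{K_*} = 0 and R + Bᵀ X_* B ≻ 0, and let K_ζ be a gain (possibly only marginally stabilizing) whose Lyapunov equation admits a symmetric solution Z with Z ⪰ X_*. If (λ, v) is an eigenpair of A − B K_ζ with |λ| = 1, then (K_ζ − K_*) v = 0, and hence (A − B K_*) v = λ v. In particular, since A − B K_* is Schur, no such eigenpair exists, i.e., no eigenvalue of A − B K_ζ can lie on the unit circle. -/

import Mathlib

open Matrix
open scoped ENNReal

/-- Spectral radius of a real square matrix, computed over ℂ. -/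
noncomputable def specRad {n : ℕ} (A : Matrix (Fin n) (Fin n) ℝ) : ℝ≥0∞ :=
  spectralRadius ℂ (A.map Complex.ofReal)

/-- A real square matrix is Schur stable if its spectral radius is `< 1`. -/
def IsSchur {n : ℕ} (A : Matrix (Fin n) (Fin n) ℝ) : Prop := specRad A < 1

private lemma mapT {p q : ℕ} (M : Matrix (Fin p) (Fin q) ℝ) :
    (Mᵀ).map Complex.ofReal = (M.map Complex.ofReal)ᴴ := by
  ext i j
  simp [conjTranspose_apply, Complex.conj_ofReal]

private lemma mapMul {p q r : ℕ} (M : Matrix (Fin p) (Fin q) ℝ) (N : Matrix (Fin q) (Fin r) ℝ) :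
    (M * N).map Complex.ofReal = M.map Complex.ofReal * N.map Complex.ofReal := by
  ext i j
  simp [Matrix.mul_apply]

private lemma mapAdd {p q : ℕ} (M N : Matrix (Fin p) (Fin q) ℝ) :
    (M + N).map Complex.ofReal = M.map Complex.ofReal + N.map Complex.ofReal := by
  ext i j; simp

private lemma mapSub {p q : ℕ} (M N : Matrix (Fin p) (Fin q) ℝ) :
    (M - N).map Complex.ofReal = M.map Complex.ofReal - N.map Complex.ofReal := by
  ext i j; simp

private lemma posdef_kernel {k : ℕ} {S : Matrix (Fin k) (Fin k) ℝ} (hS : S.PosDef)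
    {w : Fin k → ℂ} (hw : star w ⬝ᵥ (S.map Complex.ofReal) *ᵥ w = 0) : w = 0 := by
  set a : Fin k → ℝ := fun i => (w i).re with ha
  set b : Fin k → ℝ := fun i => (w i).im with hb
  have hre : (star w ⬝ᵥ (S.map Complex.ofReal) *ᵥ w).re
      = a ⬝ᵥ S *ᵥ a + b ⬝ᵥ S *ᵥ b := by
    simp only [dotProduct, mulVec, Pi.star_apply, map_apply, Complex.re_sum, Finset.mul_sum]
    rw [← Finset.sum_add_distrib]
    refine Finset.sum_congr rfl fun i _ => ?_
    rw [← Finset.sum_add_distrib]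
    refine Finset.sum_congr rfl fun j _ => ?_
    simp [Complex.mul_re, ha, hb, Complex.conj_re, Complex.conj_im]
  rw [hw] at hre
  norm_num at hre
  have h1 : 0 ≤ a ⬝ᵥ S *ᵥ a := by simpa using hS.posSemidef.dotProduct_mulVec_nonneg a
  have h2 : 0 ≤ b ⬝ᵥ S *ᵥ b := by simpa using hS.posSemidef.dotProduct_mulVec_nonneg b
  have haz : a = 0 := by
    by_contra h
    have : 0 < a ⬝ᵥ S *ᵥ a := by simpa using hS.dotProduct_mulVec_pos h
    linarith
  have hbz : b = 0 := by
    by_contra h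
    have : 0 < b ⬝ᵥ S *ᵥ b := by simpa using hS.dotProduct_mulVec_pos h
    linarith
  funext i
  exact Complex.ext (congrFun haz i) (congrFun hbz i)

/-- No eigenvalue of `A − BK_ζ` lies on the unit circle when `K_ζ` admits a
symmetric Lyapunov solution `Z ⪰ X_*` and `K_*` is a stabilizing stationary gain with
`R + BᵀX_*B ≻ 0`.  If `(λ, v)` were such a unit-modulus eigenpair, then `(K_ζ − K_*)v = 0`,
hence `(A − BK_*)v = λ v`, contradicting that `A − BK_*` is Schur. -/
theorem stmt9 {n m : ℕ} (A : Matrix (Fin n) (Fin n) ℝ) (B : Matrix (Fin n) (Fin m) ℝ)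
    (Q : Matrix (Fin n) (Fin n) ℝ) (R : Matrix (Fin m) (Fin m) ℝ)
    (hQ : Qᵀ = Q) (hR : Rᵀ = R)
    (Ks Kz : Matrix (Fin m) (Fin n) ℝ) (Xs Z : Matrix (Fin n) (Fin n) ℝ)
    (hXs : Xsᵀ = Xs) (hSs : IsSchur (A - B * Ks))
    (hLyaps : (A - B * Ks)ᵀ * Xs * (A - B * Ks) + Q + Ksᵀ * R * Ks = Xs)
    (hNs : R * Ks - Bᵀ * Xs * (A - B * Ks) = 0)
    (hPs : (R + Bᵀ * Xs * B).PosDef)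
    (hZ : Zᵀ = Z)
    (hLyapz : (A - B * Kz)ᵀ * Z * (A - B * Kz) + Q + Kzᵀ * R * Kz = Z)
    (hZXs : (Z - Xs).PosSemidef)
    (lam : ℂ) (v : Fin n → ℂ) (hv : v ≠ 0) (hlam : ‖lam‖ = 1)
    (heig : ((A - B * Kz).map Complex.ofReal).mulVec v = lam • v) :
    ((Kz - Ks).map Complex.ofReal).mulVec v = 0 ∧
    ((A - B * Ks).map Complex.ofReal).mulVec v = lam • v ∧
    False := by
  -- transposed stationarity condition
  have hNsT : Ksᵀ * R - (A - B * Ks)ᵀ * Xs * B = 0 := by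
    have h := congrArg Matrix.transpose hNs
    simpa only [Matrix.transpose_sub, Matrix.transpose_mul, Matrix.transpose_transpose, hXs, hR,
      Matrix.transpose_zero, Matrix.mul_assoc] using h
  -- the key real matrix identity
  have key : Z - Xs = (A - B * Kz)ᵀ * (Z - Xs) * (A - B * Kz)
      + (Kz - Ks)ᵀ * (R + Bᵀ * Xs * B) * (Kz - Ks) := by
    have e : ((A - B * Kz)ᵀ * Z * (A - B * Kz) + Q + Kzᵀ * R * Kz)
        - ((A - B * Ks)ᵀ * Xs * (A - B * Ks) + Q + Ksᵀ * R * Ks)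
        - ((A - B * Kz)ᵀ * (Z - Xs) * (A - B * Kz)
            + (Kz - Ks)ᵀ * (R + Bᵀ * Xs * B) * (Kz - Ks))
        = (Ksᵀ * R - (A - B * Ks)ᵀ * Xs * B) * (Kz - Ks)
            + (Kz - Ks)ᵀ * (R * Ks - Bᵀ * Xs * (A - B * Ks)) := by
      simp only [Matrix.transpose_sub, Matrix.transpose_mul, hXs, hR, Matrix.sub_mul,
        Matrix.mul_sub, Matrix.add_mul, Matrix.mul_add, Matrix.mul_assoc]
      abel
    rw [hNs, hNsT, Matrix.zero_mul, Matrix.mul_zero, add_zero, hLyapz, hLyaps] at e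
    exact sub_eq_zero.mp e
  -- complexified identity
  have keyC : (Z - Xs).map Complex.ofReal
      = ((A - B * Kz).map Complex.ofReal)ᴴ * ((Z - Xs).map Complex.ofReal)
          * ((A - B * Kz).map Complex.ofReal)
        + ((Kz - Ks).map Complex.ofReal)ᴴ * ((R + Bᵀ * Xs * B).map Complex.ofReal)
          * ((Kz - Ks).map Complex.ofReal) := by
    have h := congrArg (fun M => M.map Complex.ofReal) key
    simpa only [mapAdd, mapMul, mapT] using h
  -- unit modulus
  have hlam2 : star lam * lam = 1 := by
    have h1 : Complex.normSq lam = 1 := by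
      rw [Complex.normSq_eq_norm_sq, hlam]; norm_num
    calc star lam * lam = lam * (starRingEnd ℂ) lam := mul_comm _ _
      _ = (Complex.normSq lam : ℂ) := Complex.mul_conj lam
      _ = 1 := by rw [h1]; norm_num
  -- evaluate the quadratic form at v
  have ev1 : star v ⬝ᵥ (((A - B * Kz).map Complex.ofReal)ᴴ * ((Z - Xs).map Complex.ofReal)
      * ((A - B * Kz).map Complex.ofReal)) *ᵥ v
      = star v ⬝ᵥ ((Z - Xs).map Complex.ofReal) *ᵥ v := by
    rw [← Matrix.mulVec_mulVec, ← Matrix.mulVec_mulVec, Matrix.dotProduct_mulVec,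
      ← Matrix.star_mulVec, heig, star_smul, Matrix.mulVec_smul, smul_dotProduct,
      dotProduct_smul, smul_eq_mul, smul_eq_mul, ← mul_assoc, hlam2, one_mul]
  have ev2 : star v ⬝ᵥ (((Kz - Ks).map Complex.ofReal)ᴴ * ((R + Bᵀ * Xs * B).map Complex.ofReal)
      * ((Kz - Ks).map Complex.ofReal)) *ᵥ v
      = star (((Kz - Ks).map Complex.ofReal) *ᵥ v) ⬝ᵥ
          ((R + Bᵀ * Xs * B).map Complex.ofReal) *ᵥ (((Kz - Ks).map Complex.ofReal) *ᵥ v) := by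
    rw [← Matrix.mulVec_mulVec, ← Matrix.mulVec_mulVec, Matrix.dotProduct_mulVec,
      ← Matrix.star_mulVec]
  have e2 : star v ⬝ᵥ ((Z - Xs).map Complex.ofReal) *ᵥ v
      = star v ⬝ᵥ ((Z - Xs).map Complex.ofReal) *ᵥ v
        + star (((Kz - Ks).map Complex.ofReal) *ᵥ v) ⬝ᵥ
            ((R + Bᵀ * Xs * B).map Complex.ofReal) *ᵥ (((Kz - Ks).map Complex.ofReal) *ᵥ v) := by
    conv_lhs => rw [keyC]
    rw [Matrix.add_mulVec, dotProduct_add, ev1, ev2]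
  have hwz : star (((Kz - Ks).map Complex.ofReal) *ᵥ v) ⬝ᵥ
      ((R + Bᵀ * Xs * B).map Complex.ofReal) *ᵥ (((Kz - Ks).map Complex.ofReal) *ᵥ v) = 0 := by
    linear_combination e2.symm
  have hW0 : ((Kz - Ks).map Complex.ofReal) *ᵥ v = 0 := posdef_kernel hPs hwz
  -- second conjunct
  have hsecond : ((A - B * Ks).map Complex.ofReal).mulVec v = lam • v := by
    have hdecomp : (A - B * Ks : Matrix (Fin n) (Fin n) ℝ) = (A - B * Kz) + B * (Kz - Ks) := by
      rw [Matrix.mul_sub]; abel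
    rw [hdecomp, mapAdd, mapMul, Matrix.add_mulVec, heig, ← Matrix.mulVec_mulVec, hW0,
      Matrix.mulVec_zero, add_zero]
  refine ⟨hW0, hsecond, ?_⟩
  -- contradiction with Schur stability
  have hnn : (‖lam‖₊ : ℝ≥0∞) = 1 := by
    have : ‖lam‖₊ = 1 := by
      ext
      simpa using hlam
    rw [this]; norm_num
  have hmem : lam ∈ spectrum ℂ ((A - B * Ks).map Complex.ofReal) := by
    rw [spectrum.mem_iff]
    intro hunit
    obtain ⟨u, hu⟩ := hunit
    have hker : (algebraMap ℂ (Matrix (Fin n) (Fin n) ℂ) lam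
        - (A - B * Ks).map Complex.ofReal) *ᵥ v = 0 := by
      rw [Matrix.sub_mulVec, hsecond]
      have h1 : algebraMap ℂ (Matrix (Fin n) (Fin n) ℂ) lam
          = lam • (1 : Matrix (Fin n) (Fin n) ℂ) := by
        rw [Algebra.algebraMap_eq_smul_one]
      rw [h1, Matrix.smul_mulVec, Matrix.one_mulVec, sub_self]
    have hv0 : v = 0 := by
      have h2 : (u : Matrix (Fin n) (Fin n) ℂ) *ᵥ v = 0 := by rw [hu]; exact hker
      have h4 : ((u⁻¹ : (Matrix (Fin n) (Fin n) ℂ)ˣ) : Matrix (Fin n) (Fin n) ℂ) *ᵥ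
          ((u : Matrix (Fin n) (Fin n) ℂ) *ᵥ v) = v := by
        rw [Matrix.mulVec_mulVec, Units.inv_mul, Matrix.one_mulVec]
      rw [h2, Matrix.mulVec_zero] at h4
      exact h4.symm
    exact hv hv0
  have hle : (‖lam‖₊ : ℝ≥0∞) ≤ specRad (A - B * Ks) := by
    unfold specRad spectralRadius
    exact le_iSup₂ (α := ℝ≥0∞) lam hmem
  have hSs' : specRad (A - B * Ks) < 1 := hSs
  rw [hnn] at hle
  exact absurd hSs' (not_lt.mpr hle)
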